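/- Let (R, 𝔪) be a Noetherian local ring, M a finitely generated R-module, and x_1, …, x_t an M-regular sequence with t = dim M > 0. Then the limit closure (x)_M^{lim} equals (x_1, …, x_t)M. -/

import Mathlib

open Submodule RingTheory.Sequence Pointwise IsLocalRing

section Aux

variable {R M : Type*} [CommRing R] [AddCommGroup M] [Module R M]

lemma isSMulRegular_quot_iff (N : Submodule R M) (r : R) :
    IsSMulRegular (M ⧸ N) r ↔ ∀ m : M, r • m ∈ N → m ∈ N := by
  constructor
  · intro h m hm
    have : r • (Submodule.Quotient.mk m : M ⧸ N) = r • (0 : M ⧸ N) := by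
      rw [smul_zero, ← Submodule.Quotient.mk_smul, Submodule.Quotient.mk_eq_zero]
      exact hm
    simpa [Submodule.Quotient.mk_eq_zero] using h this
  · intro h a b hab
    obtain ⟨u, rfl⟩ := Submodule.Quotient.mk_surjective N a
    obtain ⟨v, rfl⟩ := Submodule.Quotient.mk_surjective N b
    have hab' : (Submodule.Quotient.mk (r • u) : M ⧸ N) = Submodule.Quotient.mk (r • v) := by
      simpa [Submodule.Quotient.mk_smul] using hab
    rw [Submodule.Quotient.eq] at hab'
    rw [Submodule.Quotient.eq]
    exact h _ (by simpa [smul_sub] using hab')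

lemma wr_iff_elem (L : List R) : IsWeaklyRegular M L ↔
    ∀ i (h : i < L.length), ∀ m : M,
      L[i] • m ∈ (Ideal.ofList (L.take i) • ⊤ : Submodule R M) →
        m ∈ (Ideal.ofList (L.take i) • ⊤ : Submodule R M) := by
  rw [isWeaklyRegular_iff]
  exact forall_congr' fun i => forall_congr' fun h => isSMulRegular_quot_iff _ _

lemma mem_sing_smul {c : R} {m : M} :
    m ∈ (Ideal.span {c} • ⊤ : Submodule R M) ↔ ∃ u, m = c • u := by
  rw [Submodule.ideal_span_singleton_smul, ← SetLike.mem_coe,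
    Submodule.coe_pointwise_smul, Set.mem_smul_set]
  simp [eq_comm]

lemma mem_sing_smul_sup {c : R} {K : Submodule R M} {m : M} :
    m ∈ (Ideal.span {c} • ⊤ ⊔ K : Submodule R M) ↔ ∃ u k, k ∈ K ∧ m = c • u + k := by
  rw [Submodule.mem_sup]
  constructor
  · rintro ⟨y, hy, k, hk, rfl⟩
    obtain ⟨u, rfl⟩ := mem_sing_smul.mp hy
    exact ⟨u, k, hk, rfl⟩
  · rintro ⟨u, k, hk, rfl⟩
    exact ⟨c • u, mem_sing_smul.mpr ⟨u, rfl⟩, k, hk, rfl⟩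

/-- If `y` is regular mod `K` then so is `y ^ k`. -/
lemma pow_regular_mod {y : R} {K : Submodule R M} (Hy : ∀ m : M, y • m ∈ K → m ∈ K)
    (k : ℕ) : ∀ m : M, y ^ k • m ∈ K → m ∈ K := by
  induction k with
  | zero => intro m hm; simpa using hm
  | succ k ih =>
    intro m hm
    rw [pow_succ, mul_comm, mul_smul] at hm
    exact ih m (Hy _ hm)

/-- Colon-capturing for a single element: `(y^{a+1}M + K) :_M y^a ⊆ yM + K`
when `y` is regular mod `K`. -/
lemma colon_pow {y : R} {K : Submodule R M} (Hy : ∀ m : M, y • m ∈ K → m ∈ K) :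
    ∀ (a : ℕ) (v : M), y ^ a • v ∈ (Ideal.span {y ^ (a + 1)} • ⊤ ⊔ K : Submodule R M) →
      v ∈ (Ideal.span {y} • ⊤ ⊔ K : Submodule R M) := by
  intro a
  induction a with
  | zero =>
    intro v hv
    simpa using hv
  | succ a ih =>
    intro v hv
    obtain ⟨u, k, hk, he⟩ := mem_sing_smul_sup.mp hv
    have h1 : y • (y ^ a • v - y ^ (a + 1) • u) ∈ K := by
      have : y • (y ^ a • v - y ^ (a + 1) • u)
          = y ^ (a + 1) • v - y ^ (a + 2) • u := by
        rw [smul_sub, ← mul_smul, ← mul_smul, ← pow_succ', ← pow_succ']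
      rw [this]
      have : y ^ (a + 1) • v - y ^ (a + 2) • u = k := by
        rw [he]; ring_nf; abel
      rwa [this]
    have h2 : y ^ a • v ∈ (Ideal.span {y ^ (a + 1)} • ⊤ ⊔ K : Submodule R M) := by
      refine mem_sing_smul_sup.mpr ⟨u, _, Hy _ h1, ?_⟩
      abel
    exact ih v h2

/-- The head of a weakly regular sequence may be replaced by any of its powers,
provided it is regular modulo every prefix of the tail. -/
lemma powHeadCore {y : R} {ys : List R} (h : IsWeaklyRegular M (y :: ys))
    (H : ∀ i ≤ ys.length, ∀ m : M,
      y • m ∈ (Ideal.ofList (ys.take i) • ⊤ : Submodule R M) →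
        m ∈ (Ideal.ofList (ys.take i) • ⊤ : Submodule R M))
    (a : ℕ) : IsWeaklyRegular M (y ^ a :: ys) := by
  rw [wr_iff_elem] at h ⊢
  intro i hi
  match i with
  | 0 =>
    intro m hm
    simp only [List.getElem_cons_zero, List.take_zero, Ideal.ofList_nil, bot_smul,
      Submodule.mem_bot] at hm ⊢
    have h0 := h 0 (by simp)
    simp only [List.getElem_cons_zero, List.take_zero, Ideal.ofList_nil, bot_smul,
      Submodule.mem_bot] at h0
    have := pow_regular_mod (K := (⊥ : Submodule R M))
      (fun m hm => Submodule.mem_bot _ |>.mpr (h0 m (Submodule.mem_bot _ |>.mp hm))) a m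
      (Submodule.mem_bot _ |>.mpr (by simpa using hm))
    simpa using this
  | i + 1 =>
    simp only [List.getElem_cons_succ, List.take_succ_cons, Ideal.ofList_cons,
      Submodule.sup_smul] at *
    have hi' : i < ys.length := by simpa using hi
    set K : Submodule R M := Ideal.ofList (ys.take i) • ⊤ with hK
    have Hr : ∀ m : M, ys[i] • m ∈ (Ideal.span {y} • ⊤ ⊔ K : Submodule R M) →
        m ∈ (Ideal.span {y} • ⊤ ⊔ K : Submodule R M) := by
      intro m hm
      have := h (i + 1) (by simpa using hi') m
      simp only [List.getElem_cons_succ, List.take_succ_cons, Ideal.ofList_cons,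
        Submodule.sup_smul] at this
      exact this hm
    have Hy : ∀ m : M, y • m ∈ K → m ∈ K := H i (le_of_lt hi')
    induction a with
    | zero =>
      intro m _
      refine Submodule.mem_sup_left ?_
      rw [pow_zero]
      have : m = (1 : R) • m := (one_smul R m).symm
      rw [this]
      exact Submodule.smul_mem_smul (Ideal.subset_span rfl) Submodule.mem_top
    | succ a ih =>
      intro m hm
      have hle : (Ideal.span {y ^ (a + 1)} • ⊤ : Submodule R M) ≤ Ideal.span {y ^ a} • ⊤ := by
        refine Submodule.smul_mono_left ?_
        rw [Ideal.span_le]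
        rintro _ rfl
        exact Ideal.mem_span_singleton.mpr ⟨y, pow_succ y a⟩
      have hm' : ys[i] • m ∈ (Ideal.span {y ^ a} • ⊤ ⊔ K : Submodule R M) :=
        sup_le_sup_right hle K hm
      obtain ⟨m', k, hk, hme⟩ := mem_sing_smul_sup.mp (ih (Nat.succ_lt_succ hi') m hm')
      obtain ⟨u, k₂, hk₂, hre⟩ := mem_sing_smul_sup.mp hm
      have key : y ^ a • (ys[i] • m' - y • u) ∈ K := by
        have e1 : y ^ a • (ys[i] • m' - y • u) = k₂ - ys[i] • k := by
          have : ys[i] • m = y ^ a • (ys[i] • m') + ys[i] • k := by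
            rw [hme, smul_add, smul_comm]
          rw [hre] at this
          have e2 : y ^ a • (ys[i] • m') = y ^ (a + 1) • u + k₂ - ys[i] • k := by
            rw [eq_sub_iff_add_eq]; exact this.symm
          rw [smul_sub, e2, ← mul_smul, ← pow_succ]
          abel
        rw [e1]
        exact Submodule.sub_mem _ hk₂ (Submodule.smul_mem _ _ hk)
      have h3 : ys[i] • m' ∈ (Ideal.span {y} • ⊤ ⊔ K : Submodule R M) :=
        mem_sing_smul_sup.mpr ⟨u, _, pow_regular_mod Hy a _ key, by abel⟩
      obtain ⟨v, k₃, hk₃, hve⟩ := mem_sing_smul_sup.mp (Hr m' h3)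
      refine mem_sing_smul_sup.mpr
        ⟨v, y ^ a • k₃ + k, Submodule.add_mem _ (Submodule.smul_mem _ _ hk₃) hk, ?_⟩
      rw [hme, hve, smul_add, ← mul_smul, ← pow_succ]
      abel

/-- If `L` is weakly regular on `M` (over a local ring, `M` Noetherian, entries in the
maximal ideal), then `L[j]` is regular on `M` modulo the other entries of `L`. -/
lemma regular_mod_erase [IsLocalRing R] [IsNoetherian R M] (L : List R) (j : ℕ)
    (hj : j < L.length) (h : IsWeaklyRegular M L)
    (hmem : ∀ r ∈ L, r ∈ maximalIdeal R) :
    ∀ m : M, L[j] • m ∈ (Ideal.ofList (L.take j ++ L.drop (j + 1)) • ⊤ : Submodule R M) →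
      m ∈ (Ideal.ofList (L.take j ++ L.drop (j + 1)) • ⊤ : Submodule R M) := by
  set A : List R := L.take j ++ L.drop (j + 1) with hA
  have hperm : L.Perm (A ++ [L[j]]) := by
    rw [hA, List.append_assoc]
    conv_lhs => rw [← List.take_append_drop j L, List.drop_eq_getElem_cons hj]
    exact List.Perm.append_left _ (List.perm_append_singleton _ _).symm
  have hZ : IsWeaklyRegular M (A ++ [L[j]]) :=
    IsLocalRing.isWeaklyRegular_of_perm_of_subset_maximalIdeal h hperm hmem
  have hlen : A.length < (A ++ [L[j]]).length := by simp
  have := (wr_iff_elem _).mp hZ A.length hlen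
  rwa [List.getElem_concat_length, List.take_left] at this
  rfl

/-- Powering the head of a weakly regular sequence over a local ring. -/
lemma powHead [IsLocalRing R] [IsNoetherian R M] {y : R} {ys : List R}
    (h : IsWeaklyRegular M (y :: ys)) (hmem : ∀ r ∈ y :: ys, r ∈ maximalIdeal R)
    (a : ℕ) : IsWeaklyRegular M (y ^ a :: ys) := by
  refine powHeadCore h (fun i hi m hm => ?_) a
  have hpre : IsWeaklyRegular M (y :: ys.take i) := by
    have : IsWeaklyRegular M ((y :: ys.take i) ++ ys.drop i) := by
      rwa [List.cons_append, List.take_append_drop]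
    exact ((isWeaklyRegular_append_iff M _ _).mp this).1
  have hmem' : ∀ r ∈ y :: ys.take i, r ∈ maximalIdeal R := by
    intro r hr
    rcases List.mem_cons.mp hr with rfl | hr
    · exact hmem r List.mem_cons_self
    · exact hmem r (List.mem_cons_of_mem _ (List.mem_of_mem_take hr))
  have := regular_mod_erase (y :: ys.take i) 0 (by simp) hpre hmem' m
  simpa using this hm

lemma powMiddle [IsLocalRing R] [IsNoetherian R M] (A B : List R) (y : R)
    (h : IsWeaklyRegular M (A ++ y :: B))
    (hmem : ∀ r ∈ A ++ y :: B, r ∈ maximalIdeal R) (a : ℕ) :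
    IsWeaklyRegular M (A ++ y ^ a :: B) := by
  rw [isWeaklyRegular_append_iff] at h ⊢
  refine ⟨h.1, ?_⟩
  refine powHead h.2 (fun r hr => ?_) a
  exact hmem r (List.mem_append.mpr (Or.inr hr))

lemma ofFn_update {t : ℕ} (f : Fin t → R) (c : Fin t) (z : R) :
    List.ofFn (Function.update f c z) = (List.ofFn f).set c z := by
  apply List.ext_getElem
  · simp
  · intro i h1 h2
    have hi : i < t := by simpa using h1
    rw [List.getElem_ofFn, List.getElem_set, List.getElem_ofFn, Function.update_apply]
    by_cases hic : (c : ℕ) = i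
    · rw [if_pos hic, if_pos (Fin.ext hic.symm)]
    · rw [if_neg hic, if_neg (fun hh => hic (congrArg Fin.val hh).symm)]

lemma list_set_decomp {t : ℕ} (f : Fin t → R) (c : Fin t) (z : R) :
    (List.ofFn f).set c z = (List.ofFn f).take c ++ z :: (List.ofFn f).drop (c + 1) :=
  List.set_eq_take_cons_drop z (by simp [c.isLt])

lemma ofFn_decomp {t : ℕ} (f : Fin t → R) (c : Fin t) :
    List.ofFn f = (List.ofFn f).take c ++ f c :: (List.ofFn f).drop (c + 1) := by
  rw [← list_set_decomp, ← ofFn_update, Function.update_eq_self]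

/-- Powering one entry of a weakly regular sequence. -/
lemma powAt [IsLocalRing R] [IsNoetherian R M] {t : ℕ} (f : Fin t → R)
    (h : IsWeaklyRegular M (List.ofFn f)) (hmem : ∀ i, f i ∈ maximalIdeal R)
    (c : Fin t) (a : ℕ) :
    IsWeaklyRegular M (List.ofFn (Function.update f c (f c ^ a))) := by
  rw [ofFn_update, list_set_decomp]
  refine powMiddle _ _ _ ?_ ?_ a
  · rw [← ofFn_decomp]; exact h
  · rw [← ofFn_decomp]
    intro r hr
    obtain ⟨i, rfl⟩ := List.mem_ofFn.mp hr
    exact hmem i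

lemma ofList_erase_ofFn {t : ℕ} (f : Fin t → R) (c : Fin t) :
    Ideal.ofList ((List.ofFn f).take c ++ (List.ofFn f).drop (c + 1)) =
      Ideal.span (f '' {i | i ≠ c}) := by
  apply congrArg Ideal.span
  ext r
  simp only [Set.mem_setOf_eq, List.mem_append, Set.mem_image]
  constructor
  · rintro (h | h)
    · obtain ⟨i, hi, rfl⟩ := List.mem_iff_getElem.mp h
      have hi' : i < (c : ℕ) := by simpa using hi
      have hit : i < t := lt_of_lt_of_le hi' (le_of_lt c.isLt)
      refine ⟨⟨i, hit⟩, fun he => ?_, ?_⟩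
      · exact absurd (congrArg Fin.val he) (Nat.ne_of_lt hi')
      · rw [List.getElem_take, List.getElem_ofFn]
    · obtain ⟨i, hi, rfl⟩ := List.mem_iff_getElem.mp h
      have hi' : (c : ℕ) + 1 + i < t := by
        have := hi; simp only [List.length_drop, List.length_ofFn] at this; omega
      refine ⟨⟨(c : ℕ) + 1 + i, hi'⟩, fun he => ?_, ?_⟩
      · have := congrArg Fin.val he; simp at this; omega
      · rw [List.getElem_drop, List.getElem_ofFn]
  · rintro ⟨i, hne, rfl⟩
    have hvne : (i : ℕ) ≠ (c : ℕ) := fun h => hne (Fin.ext h)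
    rcases Nat.lt_or_ge (i : ℕ) (c : ℕ) with hlt | hge
    · left
      rw [List.mem_iff_getElem]
      refine ⟨i, by simp [i.isLt]; omega, ?_⟩
      rw [List.getElem_take, List.getElem_ofFn]
    · right
      have hgt : (c : ℕ) + 1 ≤ (i : ℕ) := by omega
      rw [List.mem_iff_getElem]
      refine ⟨(i : ℕ) - ((c : ℕ) + 1), by simp [i.isLt]; omega, ?_⟩
      rw [List.getElem_drop, List.getElem_ofFn]
      congr 1
      apply Fin.ext
      simp
      omega

end Aux

/-- The limit closure of a system of elements `x : Fin t → R` in the module `M`: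
`(x)_M^{lim} = ⋃_{n>0} ((x_1^{n+1}, …, x_t^{n+1})M :_M (x_1⋯x_t)^n)`. -/
def limClosure {R : Type*} [CommRing R] {M : Type*} [AddCommGroup M] [Module R M]
    {t : ℕ} (x : Fin t → R) : Set M :=
  {m | ∃ n > 0, (∏ i, x i) ^ n • m ∈
    (Ideal.span (Set.range fun i => x i ^ (n + 1)) • (⊤ : Submodule R M))}

/-- If `x_1, …, x_t` is an `M`-regular sequence with `t = dim M > 0`, then the
limit closure `(x)_M^{lim}` equals `(x_1, …, x_t)M`. -/
theorem limClosure_eq_of_regular {R : Type*} [CommRing R] [IsNoetherianRing R] [IsLocalRing R]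
    {M : Type*} [AddCommGroup M] [Module R M] [Module.Finite R M]
    {t : ℕ} (ht : 0 < t) (x : Fin t → R)
    (hreg : RingTheory.Sequence.IsRegular M (List.ofFn x))
    (hdim : ringKrullDim (R ⧸ Module.annihilator R M) = t) :
    limClosure x = ((Ideal.span (Set.range x) • (⊤ : Submodule R M) : Submodule R M) : Set M) := by
  classical
  have hwr := hreg.toIsWeaklyRegular
  have hofList : Ideal.ofList (List.ofFn x) = Ideal.span (Set.range x) := by
    apply congrArg Ideal.span
    ext r
    simpa using List.mem_ofFn x r
  have hxm : ∀ i, x i ∈ maximalIdeal R := by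
    intro i
    by_contra hc
    have hunit : IsUnit (x i) := by
      by_contra hu
      exact hc ((mem_maximalIdeal _).mpr hu)
    have htop : Ideal.span (Set.range x) = ⊤ :=
      Ideal.eq_top_of_isUnit_mem _ (Ideal.subset_span ⟨i, rfl⟩) hunit
    exact hreg.top_ne_smul (by rw [hofList, htop, top_smul])
  ext m
  simp only [limClosure, Set.mem_setOf_eq, SetLike.mem_coe]
  constructor
  · rintro ⟨n, hn, hm⟩
    set pl : ℕ → Fin t → R := fun c i => if (i : ℕ) < c then x i else x i ^ (n + 1) with hpl
    have hplm : ∀ c i, pl c i ∈ maximalIdeal R := by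
      intro c i
      by_cases h : (i : ℕ) < c
      · simpa [hpl, h] using hxm i
      · simpa [hpl, h] using Ideal.pow_mem_of_mem _ (hxm i) (n + 1) (by omega)
    have W : ∀ d : ℕ, IsWeaklyRegular M (List.ofFn (pl (t - d))) := by
      intro d
      induction d with
      | zero =>
        have he : pl (t - 0) = x := funext fun i => if_pos (by simpa using i.isLt)
        rw [he]; exact hwr
      | succ d ih =>
        by_cases hd : d < t
        · have hct : t - (d + 1) < t := by omega
          set c := t - (d + 1) with hc
          have hsucc : c + 1 = t - d := by omega
          have hupd : pl c = Function.update (pl (c + 1)) ⟨c, hct⟩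
              (pl (c + 1) ⟨c, hct⟩ ^ (n + 1)) := by
            funext i
            rcases eq_or_ne i ⟨c, hct⟩ with rfl | hne
            · rw [Function.update_self]
              have h1 : pl c ⟨c, hct⟩ = x ⟨c, hct⟩ ^ (n + 1) := by simp [hpl]
              have h2 : pl (c + 1) ⟨c, hct⟩ = x ⟨c, hct⟩ := by simp [hpl]
              rw [h1, h2]
            · rw [Function.update_of_ne hne]
              have hne' : (i : ℕ) ≠ c := fun h => hne (Fin.ext h)
              by_cases hlt : (i : ℕ) < c
              · simp [hpl, hlt, show (i : ℕ) < c + 1 by omega]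
              · simp [hpl, hlt, show ¬ (i : ℕ) < c + 1 by omega]
          rw [hupd]
          have ih' : IsWeaklyRegular M (List.ofFn (pl (c + 1))) := by
            rw [hsucc]; exact ih
          exact powAt (pl (c + 1)) ih' (fun i => hplm _ i) ⟨c, hct⟩ (n + 1)
        · have he : t - (d + 1) = t - d := by omega
          rw [he]; exact ih
    have Wj : ∀ j, j ≤ t → IsWeaklyRegular M (List.ofFn (pl j)) := by
      intro j hj
      have := W (t - j)
      rwa [Nat.sub_sub_self hj] at this
    have claim : ∀ j, j ≤ t →
        (∏ i ∈ Finset.univ.filter (fun i : Fin t => j ≤ (i : ℕ)), x i) ^ n • m ∈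
          (Ideal.span (Set.range (pl j)) • ⊤ : Submodule R M) := by
      intro j
      induction j with
      | zero =>
        intro _
        have h0 : pl 0 = fun i => x i ^ (n + 1) := funext fun i => if_neg (Nat.not_lt_zero _)
        have hful : Finset.univ.filter (fun i : Fin t => 0 ≤ (i : ℕ)) = Finset.univ :=
          Finset.filter_true_of_mem (fun _ _ => Nat.zero_le _)
        rw [hful, h0]
        exact hm
      | succ j ih =>
        intro hj1
        have hjt : j < t := hj1
        have hj : j ≤ t := le_of_lt hjt
        set jf : Fin t := ⟨j, hjt⟩ with hjf
        have hnotmem : jf ∉ Finset.univ.filter (fun i : Fin t => j + 1 ≤ (i : ℕ)) := by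
          simp [hjf]
        have hfilter : Finset.univ.filter (fun i : Fin t => j ≤ (i : ℕ)) =
            insert jf (Finset.univ.filter fun i : Fin t => j + 1 ≤ (i : ℕ)) := by
          ext i
          simp only [Finset.mem_filter, Finset.mem_univ, true_and, Finset.mem_insert, hjf,
            Fin.ext_iff]
          omega
        set v := (∏ i ∈ Finset.univ.filter (fun i : Fin t => j + 1 ≤ (i : ℕ)), x i) ^ n • m
          with hv
        have hprod : (∏ i ∈ Finset.univ.filter (fun i : Fin t => j ≤ (i : ℕ)), x i) ^ n • m
            = x jf ^ n • v := by
          rw [hv, hfilter, Finset.prod_insert hnotmem, mul_pow, mul_smul]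
        have hin : x jf ^ n • v ∈ (Ideal.span (Set.range (pl j)) • ⊤ : Submodule R M) := by
          rw [← hprod]; exact ih hj
        set K' : Ideal R := Ideal.span (pl (j + 1) '' {i | i ≠ jf}) with hK'
        have hagree : ∀ i : Fin t, i ≠ jf → pl j i = pl (j + 1) i := by
          intro i hne
          have hne' : (i : ℕ) ≠ j := fun h => hne (Fin.ext (by simp [hjf, h]))
          by_cases hlt : (i : ℕ) < j
          · simp [hpl, hlt, show (i : ℕ) < j + 1 by omega]
          · simp [hpl, hlt, show ¬ (i : ℕ) < j + 1 by omega]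
        have hrange : ∀ g : Fin t → R, Set.range g = insert (g jf) (g '' {i | i ≠ jf}) := by
          intro g
          ext r
          constructor
          · rintro ⟨i, rfl⟩
            rcases eq_or_ne i jf with rfl | hne
            · exact Set.mem_insert _ _
            · exact Set.mem_insert_of_mem _ ⟨i, hne, rfl⟩
          · rintro (rfl | ⟨i, -, rfl⟩)
            · exact ⟨jf, rfl⟩
            · exact ⟨i, rfl⟩
        have e1 : Ideal.span (Set.range (pl j)) = Ideal.span {x jf ^ (n + 1)} ⊔ K' := by
          rw [hrange (pl j)]
          have h1 : pl j jf = x jf ^ (n + 1) := by simp [hpl, hjf]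
          have h2 : pl j '' {i | i ≠ jf} = pl (j + 1) '' {i | i ≠ jf} :=
            Set.image_congr fun i hi => hagree i hi
          rw [h1, h2, Ideal.span_insert, hK']
        have e2 : Ideal.span (Set.range (pl (j + 1))) = Ideal.span {x jf} ⊔ K' := by
          rw [hrange (pl (j + 1))]
          have h1 : pl (j + 1) jf = x jf := by simp [hpl, hjf]
          rw [h1, Ideal.span_insert, hK']
        have Hy : ∀ w : M, x jf • w ∈ (K' • ⊤ : Submodule R M) →
            w ∈ (K' • ⊤ : Submodule R M) := by
          have hwrp := Wj (j + 1) hj1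
          have hmemp : ∀ r ∈ List.ofFn (pl (j + 1)), r ∈ maximalIdeal R := by
            intro r hr
            obtain ⟨i, rfl⟩ := List.mem_ofFn.mp hr
            exact hplm _ i
          have hreg' := regular_mod_erase (List.ofFn (pl (j + 1))) j (by simp [hjt]) hwrp hmemp
          intro w hw
          have h3 := hreg' w
          rw [show ((List.ofFn (pl (j + 1))).take j ++ (List.ofFn (pl (j + 1))).drop (j + 1))
              = ((List.ofFn (pl (j + 1))).take (jf : ℕ) ++
                (List.ofFn (pl (j + 1))).drop ((jf : ℕ) + 1)) from rfl,
            ofList_erase_ofFn (pl (j + 1)) jf] at h3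
          have h4 : (List.ofFn (pl (j + 1)))[j]'(by simp [hjt]) = x jf := by
            rw [List.getElem_ofFn]
            simp [hpl, hjf]
          rw [h4] at h3
          exact h3 hw
        have hsup : x jf ^ n • v ∈
            (Ideal.span {x jf ^ (n + 1)} • ⊤ ⊔ K' • ⊤ : Submodule R M) := by
          rw [← Submodule.sup_smul, ← e1]; exact hin
        have hv2 := colon_pow Hy n v hsup
        show v ∈ _
        rw [e2, Submodule.sup_smul]
        exact hv2
    have hfin := claim t le_rfl
    have hempty : Finset.univ.filter (fun i : Fin t => t ≤ (i : ℕ)) = ∅ :=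
      Finset.filter_false_of_mem fun i _ => Nat.not_le.mpr i.isLt
    have hplt : pl t = x := funext fun i => if_pos i.isLt
    rwa [hempty, Finset.prod_empty, one_pow, one_smul, hplt] at hfin
  · intro hm
    refine ⟨1, one_pos, ?_⟩
    rw [pow_one]
    refine Submodule.smul_induction_on hm ?_ ?_
    · intro r hr u _
      refine Submodule.span_induction
        (p := fun r _ => (∏ i, x i) • (r • u) ∈
          (Ideal.span (Set.range fun i => x i ^ (1 + 1)) • (⊤ : Submodule R M)))
        ?_ ?_ ?_ ?_ hr
      · rintro r ⟨i, rfl⟩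
        have he : (∏ k, x k) • (x i • u)
            = (x i ^ (1 + 1)) • ((∏ k ∈ Finset.univ.erase i, x k) • u) := by
          rw [← Finset.mul_prod_erase Finset.univ x (Finset.mem_univ i), ← mul_smul, ← mul_smul]
          congr 1
          ring
        rw [he]
        exact Submodule.smul_mem_smul (Ideal.subset_span ⟨i, rfl⟩) Submodule.mem_top
      · simp
      · intro a b _ _ ha hb
        rw [add_smul, smul_add]
        exact Submodule.add_mem _ ha hb
      · intro a r hr' hp
        rw [smul_assoc, smul_comm (∏ k, x k) a]
        exact Submodule.smul_mem _ a hp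
    · intro u v hu hv
      rw [smul_add]
      exact Submodule.add_mem _ hu hv
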